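/- Mirror descent with constant step size 1/L on an L-relatively-smooth convex objective converges sublinearly: if f is convex, L-smooth relative to a Legendre function φ on a convex set C, and x^{k+1} = argmin_{x∈C} { ⟨∇f(x^k), x⟩ + L·D_φ(x, x^k) }, then f(x^k) − f* ≤ (L/k)·D_φ(x*, x^0) for all k ≥ 1, where x* is any minimizer of f over C. -/

import Mathlib

open scoped RealInnerProductSpace

/-- Bregman divergence of a differentiable reference function. -/
noncomputable def bregman {V : Type*} [NormedAddCommGroup V] [InnerProductSpace ℝ V]
    [CompleteSpace V] (φ : V → ℝ) (x y : V) : ℝ :=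
  φ x - φ y - ⟪gradient φ y, x - y⟫

section Aux

variable {V : Type*} [NormedAddCommGroup V] [InnerProductSpace ℝ V] [CompleteSpace V]

lemma inner_gradient_eq_fderiv (g : V → ℝ) (u d : V) :
    ⟪gradient g u, d⟫ = fderiv ℝ g u d := by
  rw [← InnerProductSpace.toDual_apply_apply, gradient, LinearIsometryEquiv.apply_symm_apply]

lemma hasDerivAt_line (g : V → ℝ) (z d : V) (hg : DifferentiableAt ℝ g z) :
    HasDerivAt (fun t : ℝ => g (z + t • d)) ⟪gradient g z, d⟫ 0 := by
  have h1 : HasDerivAt (fun t : ℝ => z + t • d) d 0 := by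
    simpa using ((hasDerivAt_id (0 : ℝ)).smul_const d).const_add z
  have h2 : HasFDerivAt g (fderiv ℝ g z) ((fun t : ℝ => z + t • d) 0) := by
    simpa using hg.hasFDerivAt
  have := h2.comp_hasDerivAt 0 h1
  rw [inner_gradient_eq_fderiv]
  exact this

lemma deriv_le_of_slope_le {q : ℝ → ℝ} {D c : ℝ} (hq : HasDerivAt q D 0)
    (h : ∀ t : ℝ, t ∈ Set.Ioc (0 : ℝ) 1 → q t - q 0 ≤ t * c) : D ≤ c := by
  have h1 : Filter.Tendsto (slope q 0) (nhdsWithin 0 (Set.Ioi 0)) (nhds D) :=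
    (hasDerivAt_iff_tendsto_slope.1 hq).mono_left
      (nhdsWithin_mono _ fun t ht => ne_of_gt ht)
  refine le_of_tendsto h1 ?_
  filter_upwards [Ioc_mem_nhdsGT_of_mem (Set.left_mem_Ico.2 one_pos)] with t ht
  have h2 := h t ht
  rw [slope_def_field, sub_zero, div_le_iff₀ ht.1]
  nlinarith [ht.1]

lemma deriv_nonneg_of_min {q : ℝ → ℝ} {D : ℝ} (hq : HasDerivAt q D 0)
    (h : ∀ t : ℝ, t ∈ Set.Ioc (0 : ℝ) 1 → q 0 ≤ q t) : 0 ≤ D := by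
  have h1 : Filter.Tendsto (slope q 0) (nhdsWithin 0 (Set.Ioi 0)) (nhds D) :=
    (hasDerivAt_iff_tendsto_slope.1 hq).mono_left
      (nhdsWithin_mono _ fun t ht => ne_of_gt ht)
  refine ge_of_tendsto h1 ?_
  filter_upwards [Ioc_mem_nhdsGT_of_mem (Set.left_mem_Ico.2 one_pos)] with t ht
  have h2 := h t ht
  rw [slope_def_field]
  exact div_nonneg (by linarith) (by linarith [ht.1])

lemma segment_point_mem {s : Set V} (hs : Convex ℝ s) {u v : V} (hu : u ∈ s) (hv : v ∈ s)
    {t : ℝ} (ht0 : 0 ≤ t) (ht1 : t ≤ 1) : u + t • (v - u) ∈ s := by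
  have h : u + t • (v - u) = (1 - t) • u + t • v := by
    rw [smul_sub, sub_smul, one_smul]; abel
  rw [h]
  exact hs hu hv (by linarith) ht0 (by ring)

/-- Gradient inequality for a differentiable convex function. -/
lemma grad_ineq {s : Set V} (g : V → ℝ) (hg : Differentiable ℝ g)
    (hgc : ConvexOn ℝ s g) {u v : V} (hu : u ∈ s) (hv : v ∈ s) :
    ⟪gradient g u, v - u⟫ ≤ g v - g u := by
  refine deriv_le_of_slope_le (hasDerivAt_line g u (v - u) (hg u)) ?_
  intro t ht
  have hmem : u + t • (v - u) = (1 - t) • u + t • v := by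
    rw [smul_sub, sub_smul, one_smul]; abel
  have h2 := hgc.2 hu hv (show (0:ℝ) ≤ 1 - t by linarith [ht.2]) ht.1.le (by ring)
  have h0 : u + (0:ℝ) • (v - u) = u := by simp
  rw [h0, hmem]
  simp only [smul_eq_mul] at h2
  nlinarith

end Aux

/-- Sublinear convergence of mirror descent with constant step size `1/L`:
if `f` is convex and `L`-smooth relative to a Legendre function `φ` on a convex set `C`,
and the iterates satisfy
`x^{k+1} = argmin_{x∈C} { ⟨∇f(x^k), x⟩ + L·D_φ(x, x^k) }`,
then `f(x^k) − f* ≤ (L/k)·D_φ(x*, x^0)` for all `k ≥ 1`. -/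
theorem stmt_7 {V : Type*} [NormedAddCommGroup V] [InnerProductSpace ℝ V]
    [FiniteDimensional ℝ V]
    (C : Set V) (hC : Convex ℝ C) (f φ : V → ℝ) (L : ℝ) (hL : 0 < L)
    (hf : Differentiable ℝ f) (hfc : ConvexOn ℝ C f)
    -- φ is Legendre: lower semicontinuous, strictly convex, essentially smooth
    (hφlsc : LowerSemicontinuous φ) (hφsc : StrictConvexOn ℝ C φ)
    (hφdiff : Differentiable ℝ φ)
    -- f is L-smooth relative to φ on C
    (hsmooth : ConvexOn ℝ (intrinsicInterior ℝ C) (fun x => L * φ x - f x))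
    -- the mirror descent iterates, well-defined in the relative interior of C
    (x : ℕ → V) (hmem : ∀ k, x k ∈ intrinsicInterior ℝ C)
    (hiter : ∀ k, ∀ y ∈ C,
      ⟪gradient f (x k), x (k + 1)⟫ + L * bregman φ (x (k + 1)) (x k) ≤
        ⟪gradient f (x k), y⟫ + L * bregman φ y (x k))
    -- x* is a minimizer of f over C
    (xstar : V) (hxstar : xstar ∈ C) (hopt : ∀ y ∈ C, f xstar ≤ f y) :
    ∀ k : ℕ, 1 ≤ k → f (x k) - f xstar ≤ (L / k) * bregman φ xstar (x 0) := by
  have hmemC : ∀ k, x k ∈ C := fun k => intrinsicInterior_subset (hmem k)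
  -- the descent lemma, from relative smoothness
  have hdesc : ∀ k, f (x (k + 1)) ≤ f (x k) + ⟪gradient f (x k), x (k + 1) - x k⟫
      + L * bregman φ (x (k + 1)) (x k) := by
    intro k
    set ψ : V → ℝ := fun w => L * φ w - f w with hψ
    have hψdiff : Differentiable ℝ ψ := (hφdiff.const_mul L).sub hf
    have h1 := grad_ineq ψ hψdiff hsmooth (hmem k) (hmem (k + 1))
    have h2 : HasFDerivAt ψ (L • fderiv ℝ φ (x k) - fderiv ℝ f (x k)) (x k) :=
      ((hφdiff (x k)).hasFDerivAt.const_mul L).sub (hf (x k)).hasFDerivAt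
    have h3 : ⟪gradient ψ (x k), x (k + 1) - x k⟫
        = L * ⟪gradient φ (x k), x (k + 1) - x k⟫ - ⟪gradient f (x k), x (k + 1) - x k⟫ := by
      rw [inner_gradient_eq_fderiv, inner_gradient_eq_fderiv, inner_gradient_eq_fderiv,
        h2.fderiv]
      simp
    rw [h3] at h1
    simp only [hψ, bregman] at h1 ⊢
    linarith
  -- variational inequality + three point identity
  have hkey : ∀ k, f (x (k + 1)) - f xstar
      ≤ L * (bregman φ xstar (x k) - bregman φ xstar (x (k + 1))) := by
    intro k
    set z := x (k + 1) with hz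
    set p := x k with hp
    set d := xstar - z with hd
    set gk := gradient f p with hgk
    -- the objective along the segment from z to xstar
    have hQderiv : HasDerivAt
        (fun t : ℝ => ⟪gk, z + t • d⟫ + L * bregman φ (z + t • d) p)
        (⟪gk, d⟫ + L * (⟪gradient φ z, d⟫ - ⟪gradient φ p, d⟫)) 0 := by
      have e1 : ∀ t : ℝ, ⟪gk, z + t • d⟫ + L * bregman φ (z + t • d) p
          = (⟪gk, z⟫ + t * ⟪gk, d⟫)
            + L * ((φ (z + t • d) - (φ p + ⟪gradient φ p, z - p⟫)) - t * ⟪gradient φ p, d⟫) := by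
        intro t
        have : z + t • d - p = (z - p) + t • d := by abel
        simp only [bregman, inner_add_right, inner_smul_right, this]
        ring
      have hA : HasDerivAt (fun t : ℝ => ⟪gk, z⟫ + t * ⟪gk, d⟫) ⟪gk, d⟫ 0 := by
        simpa using ((hasDerivAt_id (0 : ℝ)).mul_const ⟪gk, d⟫).const_add ⟪gk, z⟫
      have hB : HasDerivAt
          (fun t : ℝ => (φ (z + t • d) - (φ p + ⟪gradient φ p, z - p⟫)) - t * ⟪gradient φ p, d⟫)
          (⟪gradient φ z, d⟫ - ⟪gradient φ p, d⟫) 0 := by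
        have hφline := hasDerivAt_line φ z d (hφdiff z)
        have ht : HasDerivAt (fun t : ℝ => t * ⟪gradient φ p, d⟫) ⟪gradient φ p, d⟫ 0 := by
          simpa using (hasDerivAt_id (0 : ℝ)).mul_const ⟪gradient φ p, d⟫
        exact (hφline.sub_const _).sub ht
      have := hA.add (hB.const_mul L)
      rw [show (fun t : ℝ => ⟪gk, z + t • d⟫ + L * bregman φ (z + t • d) p) = _ from funext e1]
      exact this
    have hVI : 0 ≤ ⟪gk, d⟫ + L * (⟪gradient φ z, d⟫ - ⟪gradient φ p, d⟫) := by
      refine deriv_nonneg_of_min hQderiv ?_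
      intro t ht
      have hmemt : z + t • d ∈ C :=
        segment_point_mem hC (hmemC (k + 1)) hxstar (le_of_lt ht.1) ht.2
      have := hiter k (z + t • d) hmemt
      simp only [zero_smul, add_zero]
      exact this
    -- three point identity
    have h3pt : ⟪gradient φ z, d⟫ - ⟪gradient φ p, d⟫
        = bregman φ xstar p - bregman φ xstar z - bregman φ z p := by
      simp only [bregman, hd, inner_sub_right]
      ring
    rw [h3pt] at hVI
    -- convexity of f
    have hcvx : ⟪gk, xstar - p⟫ ≤ f xstar - f p :=
      grad_ineq f hf hfc (hmemC k) hxstar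
    have hds := hdesc k
    have hsplit : ⟪gk, z - p⟫ = ⟪gk, xstar - p⟫ - ⟪gk, d⟫ := by
      rw [hd, inner_sub_right, inner_sub_right, inner_sub_right]
      ring
    rw [← hz, ← hp, ← hgk, hsplit] at hds
    nlinarith [hVI, hcvx, hds]
  -- monotone decrease
  have hmono : ∀ k, f (x (k + 1)) ≤ f (x k) := by
    intro k
    have h1 := hiter k (x k) (hmemC k)
    have h2 : bregman φ (x k) (x k) = 0 := by simp [bregman]
    rw [h2] at h1
    have hds := hdesc k
    rw [inner_sub_right] at hds
    linarith
  have hanti : Antitone fun n => f (x n) := antitone_nat_of_succ_le hmono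
  -- nonnegativity of the Bregman divergence on C
  have hDnonneg : ∀ k, 0 ≤ bregman φ xstar (x k) := by
    intro k
    have := grad_ineq φ hφdiff hφsc.convexOn (hmemC k) hxstar
    simp only [bregman]
    linarith
  -- telescoping
  intro k hk
  have hkpos : (0 : ℝ) < (k : ℝ) := by exact_mod_cast hk
  have hsum : (k : ℝ) * (f (x k) - f xstar) ≤ L * bregman φ xstar (x 0) := by
    have h1 : ∀ j ∈ Finset.range k, f (x k) - f xstar ≤ f (x (j + 1)) - f xstar := by
      intro j hj
      have : j + 1 ≤ k := Finset.mem_range.1 hj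
      have := hanti this
      simpa using sub_le_sub_right this (f xstar)
    have h2 : ∀ j ∈ Finset.range k, f (x (j + 1)) - f xstar
        ≤ L * (bregman φ xstar (x j) - bregman φ xstar (x (j + 1))) := fun j _ => hkey j
    calc (k : ℝ) * (f (x k) - f xstar)
        = ∑ _j ∈ Finset.range k, (f (x k) - f xstar) := by
          rw [Finset.sum_const, Finset.card_range, nsmul_eq_mul]
      _ ≤ ∑ j ∈ Finset.range k, (f (x (j + 1)) - f xstar) := Finset.sum_le_sum h1
      _ ≤ ∑ j ∈ Finset.range k,
            L * (bregman φ xstar (x j) - bregman φ xstar (x (j + 1))) := Finset.sum_le_sum h2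
      _ = L * ∑ j ∈ Finset.range k,
            (bregman φ xstar (x j) - bregman φ xstar (x (j + 1))) := by
          rw [Finset.mul_sum]
      _ = L * (bregman φ xstar (x 0) - bregman φ xstar (x k)) := by
          rw [Finset.sum_range_sub' fun j => bregman φ xstar (x j)]
      _ ≤ L * bregman φ xstar (x 0) := by
          have := hDnonneg k
          nlinarith
  rw [div_mul_eq_mul_div, le_div_iff₀ hkpos]
  nlinarith [hsum]
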